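/- For every prime p, every positive integer n, and every index set I, the abelian group G = ⊕_{i ∈ I} Z/p^n Z is semi-generalized co-Bassian. -/
import Mathlib


/-- The subgroup of elements annihilated by some power of `p`
(the `p`-primary component). -/
def pComponent (G : Type*) [AddCommGroup G] (p : ℕ) : AddSubgroup G where
  carrier := {x | ∃ k : ℕ, p ^ k • x = 0}
  zero_mem' := ⟨0, smul_zero _⟩
  add_mem' := by
    rintro a b ⟨k, hk⟩ ⟨l, hl⟩
    exact ⟨k + l, by
      rw [smul_add, pow_add, mul_smul, mul_smul, smul_comm (p ^ k) (p ^ l) a, hk, hl,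
        smul_zero, smul_zero, add_zero]⟩
  neg_mem' := by
    rintro a ⟨k, hk⟩
    exact ⟨k, by rw [smul_neg, hk, neg_zero]⟩

/-- The torsion subgroup. -/
def torsionSub (G : Type*) [AddCommGroup G] : AddSubgroup G where
  carrier := {x | ∃ n : ℕ, 0 < n ∧ n • x = 0}
  zero_mem' := ⟨1, one_pos, smul_zero _⟩
  add_mem' := by
    rintro a b ⟨m, hm, hma⟩ ⟨n, hn, hnb⟩
    exact ⟨m * n, Nat.mul_pos hm hn, by
      rw [smul_add, mul_smul, mul_smul, smul_comm m n a, hma, hnb, smul_zero, smul_zero,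
        add_zero]⟩
  neg_mem' := by
    rintro a ⟨n, hn, hna⟩
    exact ⟨n, hn, by rw [smul_neg, hna, neg_zero]⟩

/-- A subgroup `A` is essential in a direct summand of the ambient group. -/
def EssentialInSummand {G : Type*} [AddCommGroup G] (A : AddSubgroup G) : Prop :=
  ∃ S S' : AddSubgroup G, IsCompl S S' ∧ A ≤ S ∧
    ∀ X : AddSubgroup G, X ≤ S → X ≠ ⊥ → A ⊓ X ≠ ⊥

/-- Semi-generalized co-Bassian group. -/
def IsSGCB (G : Type*) [AddCommGroup G] : Prop :=
  ∀ (N : AddSubgroup G) (φ : G →+ G ⧸ N), Function.Injective φ →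
    EssentialInSummand φ.range

/-- Divisible abelian group. -/
def IsDivisibleGroup (G : Type*) [AddCommGroup G] : Prop :=
  ∀ (x : G) (n : ℕ), 0 < n → ∃ y : G, n • y = x

/-- Elementary abelian group: torsion, and each `p`-primary component is killed by `p`. -/
def IsElementaryGroup (G : Type*) [AddCommGroup G] : Prop :=
  (∀ x : G, ∃ n : ℕ, 0 < n ∧ n • x = 0) ∧
    ∀ p : ℕ, p.Prime → ∀ x : G, x ∈ pComponent G p → p • x = 0

/-- `G` decomposes as (divisible) ⊕ (elementary). -/
def IsDplusE (G : Type*) [AddCommGroup G] : Prop :=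
  ∃ D E : AddSubgroup G, IsCompl D E ∧ IsDivisibleGroup ↥D ∧ IsElementaryGroup ↥E

/-- The Prüfer `p`-group, realized as the `p`-primary component of `ℚ/ℤ`. -/
def PruferGroup (p : ℕ) : Type :=
  ↥(pComponent (ℚ ⧸ AddSubgroup.zmultiples (1 : ℚ)) p)

instance (p : ℕ) : AddCommGroup (PruferGroup p) :=
  inferInstanceAs (AddCommGroup ↥(pComponent (ℚ ⧸ AddSubgroup.zmultiples (1 : ℚ)) p))

/-- `Z_{p^α}` for `α ∈ ℕ ∪ {∞}`: the cyclic group `ZMod (p^n)` for `α = n` finite,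
and the Prüfer `p`-group for `α = ∞`. -/
def Zp (p : ℕ) (α : ℕ∞) : Type :=
  WithTop.recTopCoe (PruferGroup p) (fun n => ZMod (p ^ n)) α

instance (p : ℕ) (α : ℕ∞) : AddCommGroup (Zp p α) := by
  induction α using WithTop.recTopCoe with
  | top => exact inferInstanceAs (AddCommGroup (PruferGroup p))
  | coe n => exact inferInstanceAs (AddCommGroup (ZMod (p ^ n)))

/-- A `p`-group has generalized finite `p`-rank if it is a finite direct sum of
homocyclic components `Z_{p^{σ_j}}^{(ρ_j)}` with `σ_1 < ⋯ < σ_n` in `ω ∪ {∞}` and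
`ρ_j` finite for all `j > 1`. -/
def HasGenFiniteRank (p : ℕ) (H : Type u) [AddCommGroup H] : Prop :=
  ∃ (n : ℕ) (σ : Fin n → ℕ∞) (ρ : Fin n → Type u),
    StrictMono σ ∧ (∀ j : Fin n, 0 < j.val → Finite (ρ j)) ∧
      Nonempty (H ≃+ DirectSum (Fin n) (fun j => ρ j →₀ Zp p (σ j)))


/-- Hopfian group: every surjective endomorphism is injective. -/
def IsHopfian (G : Type*) [AddCommGroup G] : Prop :=
  ∀ φ : G →+ G, Function.Surjective φ → Function.Injective φ

/-- co-Bassian group. -/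
def IsCoBassian (G : Type*) [AddCommGroup G] : Prop :=
  ∀ (N : AddSubgroup G) (φ : G →+ G ⧸ N), Function.Injective φ → Function.Surjective φ

/-- generalized co-Bassian group. -/
def IsGenCoBassian (G : Type*) [AddCommGroup G] : Prop :=
  ∀ (N : AddSubgroup G) (φ : G →+ G ⧸ N), Function.Injective φ →
    ∃ S' : AddSubgroup (G ⧸ N), IsCompl φ.range S'

/-- The subgroup `pG` of an abelian group `G`. -/
def smulSub (p : ℕ) (G : Type*) [AddCommGroup G] : AddSubgroup G :=
  (AddMonoidHom.mk' (fun x : G => p • x) (fun a b => smul_add p a b)).range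

section Aux

variable {N : ℕ}

lemma zmod_div_lemma (hN : 0 < N) {d : ℕ} (hdN : d ∣ N) (x : ZMod N)
    (hx : ((N / d : ℕ) : ZMod N) * x = 0) :
    ((d : ℕ) : ZMod N) * ((x.val / d : ℕ) : ZMod N) = x := by
  haveI : NeZero N := ⟨hN.ne'⟩
  have hd : 0 < d := Nat.pos_of_dvd_of_pos hdN hN
  have hNd : 0 < N / d := Nat.div_pos (Nat.le_of_dvd hN hdN) hd
  have hxv : ((x.val : ℕ) : ZMod N) = x := by
    rw [ZMod.natCast_val, ZMod.cast_id]
  have h1 : (((N / d) * x.val : ℕ) : ZMod N) = 0 := by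
    push_cast
    rw [hxv]
    exact hx
  have h2 : N ∣ (N / d) * x.val := (ZMod.natCast_eq_zero_iff _ _).mp h1
  obtain ⟨c, hc⟩ := h2
  have hNeq : N = (N / d) * d := (Nat.div_mul_cancel hdN).symm
  have h3 : (N / d) * x.val = (N / d) * (d * c) := by
    rw [hc, ← mul_assoc, Nat.div_mul_cancel hdN]
  have h4 : x.val = d * c := Nat.eq_of_mul_eq_mul_left hNd h3
  have h5 : x.val / d = c := by rw [h4, Nat.mul_div_cancel_left _ hd]
  rw [h5, ← Nat.cast_mul, ← h4, hxv]

lemma zmod_baer_finsupp (N : ℕ) (hN : 0 < N) (I : Type*) :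
    Module.Baer (ZMod N) (I →₀ ZMod N) := by
  haveI : NeZero N := ⟨hN.ne'⟩
  haveI : IsPrincipalIdealRing (ZMod N) :=
    IsPrincipalIdealRing.of_surjective (Int.castRingHom (ZMod N)) ZMod.intCast_surjective
  intro J g
  obtain ⟨a, ha⟩ := (IsPrincipalIdealRing.principal J).principal
  have haJ : a ∈ J := by rw [ha]; exact Ideal.subset_span rfl
  set m : I →₀ ZMod N := g ⟨a, haJ⟩ with hm
  have hann : ∀ r : ZMod N, r * a = 0 → r • m = 0 := by
    intro r hr
    have h0 : r • (⟨a, haJ⟩ : J) = 0 := by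
      apply Subtype.ext
      show r • a = 0
      rw [smul_eq_mul, hr]
    rw [hm, ← map_smul, h0, map_zero]
  set d : ℕ := Nat.gcd a.val N with hd
  have hdN : d ∣ N := Nat.gcd_dvd_right _ _
  have hda : d ∣ a.val := Nat.gcd_dvd_left _ _
  have hxv : ((a.val : ℕ) : ZMod N) = a := by rw [ZMod.natCast_val, ZMod.cast_id]
  have key1 : ((N / d : ℕ) : ZMod N) * a = 0 := by
    obtain ⟨t, ht⟩ := hda
    have : ((N / d) * a.val : ℕ) = N * t := by
      rw [ht, ← mul_assoc, Nat.div_mul_cancel hdN]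
    calc ((N / d : ℕ) : ZMod N) * a = (((N / d) * a.val : ℕ) : ZMod N) := by
          rw [Nat.cast_mul, hxv]
      _ = ((N * t : ℕ) : ZMod N) := by rw [this]
      _ = 0 := by rw [Nat.cast_mul, ZMod.natCast_self, zero_mul]
  have hsm : ((N / d : ℕ) : ZMod N) • m = 0 := hann _ key1
  have hcomp : ∀ i, ((N / d : ℕ) : ZMod N) * m i = 0 := by
    intro i
    have := DFunLike.congr_fun hsm i
    simpa [Finsupp.smul_apply, smul_eq_mul] using this
  set m' : I →₀ ZMod N :=
    m.mapRange (fun x => ((x.val / d : ℕ) : ZMod N)) (by simp) with hm'def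
  have hm' : ((d : ℕ) : ZMod N) • m' = m := by
    ext i
    rw [Finsupp.smul_apply, hm'def, Finsupp.mapRange_apply, smul_eq_mul]
    exact zmod_div_lemma hN hdN (m i) (hcomp i)
  -- Bezout
  have hbez : ((d : ℕ) : ZMod N) = a * ((Nat.gcdA a.val N : ℤ) : ZMod N) := by
    have := congrArg (fun z : ℤ => ((z : ℤ) : ZMod N)) (Nat.gcd_eq_gcd_ab a.val N)
    simp only [Int.cast_add, Int.cast_mul, Int.cast_natCast] at this
    rw [ZMod.natCast_self, zero_mul, add_zero, hxv] at this
    exact this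
  set m₀ : I →₀ ZMod N := ((Nat.gcdA a.val N : ℤ) : ZMod N) • m' with hm₀
  have ham₀ : a • m₀ = m := by
    rw [hm₀, smul_smul, ← hbez, hm']
  refine ⟨LinearMap.toSpanSingleton (ZMod N) _ m₀, ?_⟩
  intro x hx
  have hx' : x ∈ Submodule.span (ZMod N) {a} := by rw [← ha]; exact hx
  obtain ⟨r, hr⟩ := Submodule.mem_span_singleton.mp hx'
  rw [smul_eq_mul] at hr
  have hsub : r • (⟨a, haJ⟩ : J) = ⟨x, hx⟩ := Subtype.ext (by simpa [smul_eq_mul] using hr)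
  calc LinearMap.toSpanSingleton (ZMod N) _ m₀ x = x • m₀ := rfl
    _ = (r * a) • m₀ := by rw [hr]
    _ = r • (a • m₀) := by rw [mul_smul]
    _ = r • m := by rw [ham₀]
    _ = g (r • ⟨a, haJ⟩) := by rw [hm, map_smul]
    _ = g ⟨x, hx⟩ := by rw [hsub]

end Aux
theorem directSum_zmod_pow_isSGCB (p n : ℕ) (hp : p.Prime) (hn : 0 < n)
    (I : Type*) : IsSGCB (I →₀ ZMod (p ^ n)) := by
  intro N φ hφ
  haveI : NeZero (p ^ n) := ⟨(pow_pos hp.pos n).ne'⟩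
  letI : Module (ZMod (p ^ n)) ((I →₀ ZMod (p ^ n)) ⧸ N) :=
    QuotientAddGroup.zmodModule (fun x => by
      rw [ZModModule.char_nsmul_eq_zero]; exact zero_mem N)
  have hbaer := zmod_baer_finsupp (p ^ n) (pow_pos hp.pos n) I
  have hinj : Module.Injective (ZMod (p ^ n)) (I →₀ ZMod (p ^ n)) := hbaer.injective
  obtain ⟨h, hh⟩ := hinj.out (φ.toZModLinearMap (p ^ n)) hφ LinearMap.id
  set e : ((I →₀ ZMod (p ^ n)) ⧸ N) →+ ((I →₀ ZMod (p ^ n)) ⧸ N) :=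
    φ.comp h.toAddMonoidHom with he_def
  have he : ∀ g : I →₀ ZMod (p ^ n), e (φ g) = φ g := by
    intro g
    have hg : h.toAddMonoidHom (φ g) = g := hh g
    show φ (h.toAddMonoidHom (φ g)) = φ g
    rw [hg]
  have herange : ∀ x, e x ∈ φ.range := fun x => ⟨h.toAddMonoidHom x, rfl⟩
  have hcompl : IsCompl φ.range e.ker := by
    constructor
    · rw [disjoint_iff]
      ext x
      simp only [AddSubgroup.mem_inf, AddSubgroup.mem_bot, AddMonoidHom.mem_ker,
        AddMonoidHom.mem_range]
      constructor
      · rintro ⟨⟨g, rfl⟩, hker⟩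
        rw [he g] at hker
        exact hker
      · rintro rfl
        exact ⟨⟨0, by rw [map_zero]⟩, by rw [map_zero]⟩
    · rw [codisjoint_iff, eq_top_iff]
      intro x _
      rw [AddSubgroup.mem_sup]
      refine ⟨e x, herange x, x - e x, ?_, by abel⟩
      rw [AddMonoidHom.mem_ker, map_sub]
      obtain ⟨g, hg⟩ := herange x
      rw [← hg, he, hg, sub_self]
  refine ⟨φ.range, e.ker, hcompl, le_refl _, ?_⟩
  intro X hX hXne
  rw [inf_eq_right.mpr hX]
  exact hXne
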